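/- Let G be a group with finite generating set X and word metric d. If there exists l ≥ 1 such that every z ∈ C_1^1(G) with ∂₁ z = 0 satisfies z = ∂₂ c for some c ∈ C_2^l(G), then G is of type FP₂. -/

import Mathlib

open Finsupp

variable {G : Type*} [Group G]

/-- Word length with respect to a generating set `X`. -/
noncomputable def wordLength (X : Finset G) (g : G) : ℕ :=
  sInf {n : ℕ | ∃ w : List G, w.length = n ∧ (∀ x ∈ w, x ∈ X ∨ x⁻¹ ∈ X) ∧ w.prod = g}

/-- The left-invariant word metric `d(g,h) = l(g⁻¹h)`. -/
noncomputable def wordDist (X : Finset G) (g h : G) : ℕ :=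
  wordLength X (g⁻¹ * h)

/-- `c` is a chain in `C_q^k(S)`: its support consists of `(q+1)`-tuples of elements of `S`
that are pairwise at distance at most `k`. -/
def VRChain (X : Finset G) (S : Set G) (q k : ℕ) (c : (Fin (q + 1) → G) →₀ ℤ) : Prop :=
  ∀ σ ∈ c.support, (∀ i, σ i ∈ S) ∧ ∀ i j, wordDist X (σ i) (σ j) ≤ k

/-- The simplicial boundary map `∂_{q+1} : ℤ[G^{q+2}] → ℤ[G^{q+1}]`. -/
noncomputable def bnd (q : ℕ) :
    ((Fin (q + 2) → G) →₀ ℤ) →ₗ[ℤ] ((Fin (q + 1) → G) →₀ ℤ) :=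
  Finsupp.lift _ ℤ _
    (fun σ => ∑ i : Fin (q + 2), ((-1 : ℤ) ^ (i : ℕ)) • Finsupp.single (σ ∘ i.succAbove) (1 : ℤ))

/-- The augmentation `ε : ℤ[G] → ℤ` sending every vertex to `1`. -/
noncomputable def aug : ((Fin 1 → G) →₀ ℤ) →ₗ[ℤ] ℤ :=
  Finsupp.lift ℤ ℤ (Fin 1 → G) (fun _ => (1 : ℤ))

/-- Reduced `q`-cycles at scale `k` on `S` bound at scale `l` on `S`. -/
def BoundsAt (X : Finset G) (S : Set G) : ℕ → ℕ → ℕ → Prop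
  | 0, k, l => ∀ z : (Fin 1 → G) →₀ ℤ, VRChain X S 0 k z → aug z = 0 →
      ∃ c : (Fin 2 → G) →₀ ℤ, VRChain X S 1 l c ∧ bnd 0 c = z
  | (q + 1), k, l => ∀ z : (Fin (q + 2) → G) →₀ ℤ, VRChain X S (q + 1) k z → bnd q z = 0 →
      ∃ c : (Fin (q + 3) → G) →₀ ℤ, VRChain X S (q + 2) l c ∧ bnd (q + 1) c = z

/-- `S ⊆ G` is of type `FP_m`. -/
def TypeFP (X : Finset G) (S : Set G) (m : ℕ) : Prop :=
  ∀ q < m, ∀ k : ℕ, ∃ l ≥ k, BoundsAt X S q k l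

/-- A character on `G` is a homomorphism to the additive reals. -/
def IsCharacter (χ : G → ℝ) : Prop :=
  ∀ g h : G, χ (g * h) = χ g + χ h

/-- Simultaneous left translation on chains, making `ℤ[G^{q+1}]` a `ℤG`-module. -/
noncomputable def lTranslate (g : G) (q : ℕ) :
    ((Fin (q + 1) → G) →₀ ℤ) →ₗ[ℤ] ((Fin (q + 1) → G) →₀ ℤ) :=
  Finsupp.lmapDomain ℤ ℤ (fun σ i => g * σ i)

/-- A chain endomorphism of `ℤG`-complexes on `(C_q^k(G))_{q=0,…,m}` extending the identity
on `ℤ`: each `φ q` maps scale-`k` chains to scale-`k` chains, is `G`-equivariant,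
satisfies `ε ∘ φ₀ = ε` and commutes with the boundary maps. -/
def IsChainEndo (X : Finset G) (k m : ℕ)
    (φ : ∀ q : ℕ, ((Fin (q + 1) → G) →₀ ℤ) →ₗ[ℤ] ((Fin (q + 1) → G) →₀ ℤ)) : Prop :=
  (∀ q ≤ m, ∀ c, VRChain X Set.univ q k c → VRChain X Set.univ q k (φ q c)) ∧
  (∀ q ≤ m, ∀ (g : G) (c), VRChain X Set.univ q k c →
    φ q (lTranslate g q c) = lTranslate g q (φ q c)) ∧
  (∀ c : (Fin 1 → G) →₀ ℤ, VRChain X Set.univ 0 k c → aug (φ 0 c) = aug c) ∧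
  (∀ q : ℕ, q + 1 ≤ m → ∀ c : (Fin (q + 2) → G) →₀ ℤ, VRChain X Set.univ (q + 1) k c →
    bnd q (φ (q + 1) c) = φ q (bnd q c))

/-- The valuation of a simplex: `v(σ) = min_i χ(g_i)` (with values in `EReal`). -/
noncomputable def vsimp (χ : G → ℝ) {q : ℕ} (σ : Fin (q + 1) → G) : EReal :=
  ⨅ i, (χ (σ i) : EReal)

/-- The valuation of a chain: the minimum of the valuations of the simplices in its support
(`⊤` for the zero chain). -/
noncomputable def vchain (χ : G → ℝ) {q : ℕ} (c : (Fin (q + 1) → G) →₀ ℤ) : EReal :=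
  ⨅ σ ∈ c.support, vsimp χ σ

section Aux

variable {G : Type*} [Group G]

/-! ### Word length basics -/

lemma wordLength_le (X : Finset G) {g : G} {w : List G}
    (hw : ∀ x ∈ w, x ∈ X ∨ x⁻¹ ∈ X) (hp : w.prod = g) :
    wordLength X g ≤ w.length :=
  Nat.sInf_le ⟨w, rfl, hw, hp⟩

lemma wordLength_exists (X : Finset G) (hX : Subgroup.closure (X : Set G) = ⊤) (g : G) :
    ∃ w : List G, w.length = wordLength X g ∧ (∀ x ∈ w, x ∈ X ∨ x⁻¹ ∈ X) ∧ w.prod = g := by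
  have hg : g ∈ Submonoid.closure ((X : Set G) ∪ (X : Set G)⁻¹) := by
    rw [← Subgroup.closure_toSubmonoid, hX]; trivial
  obtain ⟨w, hw, hp⟩ := Submonoid.exists_list_of_mem_closure hg
  have hne : {n : ℕ | ∃ w : List G, w.length = n ∧ (∀ x ∈ w, x ∈ X ∨ x⁻¹ ∈ X) ∧ w.prod = g}.Nonempty := by
    refine ⟨w.length, w, rfl, fun x hx => ?_, hp⟩
    rcases hw x hx with h | h
    · exact Or.inl h
    · exact Or.inr (by simpa using h)
  have := Nat.sInf_mem hne
  obtain ⟨w', h1, h2, h3⟩ := this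
  exact ⟨w', h1, h2, h3⟩

lemma wordDist_self (X : Finset G) (g : G) : wordDist X g g = 0 := by
  have : wordLength X (1 : G) ≤ 0 := wordLength_le X (g := (1:G)) (w := []) (by simp) (by simp)
  simpa [wordDist] using this

lemma wordLength_mul_le (X : Finset G) (hX : Subgroup.closure (X : Set G) = ⊤) (g h : G) :
    wordLength X (g * h) ≤ wordLength X g + wordLength X h := by
  obtain ⟨w1, hl1, hw1, hp1⟩ := wordLength_exists X hX g
  obtain ⟨w2, hl2, hw2, hp2⟩ := wordLength_exists X hX h
  have := wordLength_le X (g := g * h) (w := w1 ++ w2) (by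
    intro x hx; rcases List.mem_append.1 hx with hx | hx
    · exact hw1 x hx
    · exact hw2 x hx) (by simp [hp1, hp2])
  simpa [hl1, hl2] using this

lemma wordLength_inv_le (X : Finset G) (g : G) (hX : Subgroup.closure (X : Set G) = ⊤) :
    wordLength X g⁻¹ ≤ wordLength X g := by
  obtain ⟨w, hl, hw, hp⟩ := wordLength_exists X hX g
  have := wordLength_le X (g := g⁻¹) (w := (w.map fun x => x⁻¹).reverse) (by
    intro x hx
    simp only [List.mem_reverse, List.mem_map] at hx
    obtain ⟨y, hy, rfl⟩ := hx
    rcases hw y hy with h | h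
    · exact Or.inr (by simpa using h)
    · exact Or.inl h) (by rw [← List.prod_inv_reverse, hp])
  simpa [hl] using this

lemma wordDist_comm (X : Finset G) (hX : Subgroup.closure (X : Set G) = ⊤) (g h : G) :
    wordDist X g h = wordDist X h g := by
  have h1 := wordLength_inv_le X (g⁻¹ * h) hX
  have h2 := wordLength_inv_le X (h⁻¹ * g) hX
  simp only [mul_inv_rev, inv_inv] at h1 h2
  exact le_antisymm (by simpa [wordDist] using h2) (by simpa [wordDist] using h1)

lemma wordDist_triangle (X : Finset G) (hX : Subgroup.closure (X : Set G) = ⊤) (a b c : G) :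
    wordDist X a c ≤ wordDist X a b + wordDist X b c := by
  have := wordLength_mul_le X hX (a⁻¹ * b) (b⁻¹ * c)
  simpa [wordDist, mul_assoc] using this

lemma wordDist_gen (X : Finset G) {x : G} (hx : x ∈ X ∨ x⁻¹ ∈ X) (a : G) :
    wordDist X a (a * x) ≤ 1 := by
  have := wordLength_le X (g := x) (w := [x]) (by simpa using hx) (by simp)
  simpa [wordDist] using this

lemma wordDist_gen' (X : Finset G) (hX : Subgroup.closure (X : Set G) = ⊤)
    {x : G} (hx : x ∈ X ∨ x⁻¹ ∈ X) (a : G) :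
    wordDist X (a * x) a ≤ 1 := by
  rw [wordDist_comm X hX]; exact wordDist_gen X hx a

end Aux


section Aux2
set_option linter.unusedSectionVars false

variable {G : Type*} [Group G]

noncomputable def vtx (g : G) : (Fin 1 → G) →₀ ℤ := Finsupp.single (fun _ => g) 1
noncomputable def edge (a b : G) : (Fin 2 → G) →₀ ℤ := Finsupp.single ![a, b] 1
noncomputable def tri (a b c : G) : (Fin 3 → G) →₀ ℤ := Finsupp.single ![a, b, c] 1

lemma fin1_eta (σ : Fin 1 → G) : σ = fun _ => σ 0 := by
  funext i; exact congrArg σ (Subsingleton.elim i 0)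
lemma fin2_eta (σ : Fin 2 → G) : σ = ![σ 0, σ 1] := by
  funext i; fin_cases i <;> rfl
lemma fin3_eta (σ : Fin 3 → G) : σ = ![σ 0, σ 1, σ 2] := by
  funext i; fin_cases i <;> rfl

lemma single_eq_smul {α : Type*} (σ : α) (n : ℤ) :
    (Finsupp.single σ n : α →₀ ℤ) = n • Finsupp.single σ 1 := by
  rw [Finsupp.smul_single]; simp

lemma bnd_single (q : ℕ) (σ : Fin (q + 2) → G) (n : ℤ) :
    bnd q (Finsupp.single σ n)
      = n • ∑ i : Fin (q + 2), ((-1 : ℤ) ^ (i : ℕ)) • Finsupp.single (σ ∘ i.succAbove) (1 : ℤ) := by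
  simp [bnd, Finsupp.lift_apply, Finsupp.sum_single_index]

lemma bnd0_edge (a b : G) : bnd 0 (edge a b) = vtx b - vtx a := by
  have h0 : (![a, b] ∘ (0 : Fin 2).succAbove) = (fun _ : Fin 1 => b) := by
    funext i; fin_cases i; rfl
  have h1 : (![a, b] ∘ (1 : Fin 2).succAbove) = (fun _ : Fin 1 => a) := by
    funext i; fin_cases i; rfl
  rw [edge, bnd_single, Fin.sum_univ_two, h0, h1]
  simp [vtx, sub_eq_add_neg]

lemma bnd1_tri (a b c : G) : bnd 1 (tri a b c) = edge b c - edge a c + edge a b := by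
  have h0 : (![a, b, c] ∘ (0 : Fin 3).succAbove) = ![b, c] := by
    funext i; fin_cases i <;> rfl
  have h1 : (![a, b, c] ∘ (1 : Fin 3).succAbove) = ![a, c] := by
    funext i; fin_cases i <;> rfl
  have h2 : (![a, b, c] ∘ (2 : Fin 3).succAbove) = ![a, b] := by
    funext i; fin_cases i <;> rfl
  rw [tri, bnd_single, Fin.sum_univ_three, h0, h1, h2]
  simp [edge, sub_eq_add_neg]

lemma bnd0_bnd1 (c : (Fin 3 → G) →₀ ℤ) : bnd 0 (bnd 1 c) = 0 := by
  have key : (bnd 0).comp (bnd 1) = (0 : ((Fin 3 → G) →₀ ℤ) →ₗ[ℤ] ((Fin 1 → G) →₀ ℤ)) := by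
    apply Finsupp.lhom_ext
    intro σ n
    have hσ : (Finsupp.single σ n : (Fin 3 → G) →₀ ℤ) = n • tri (σ 0) (σ 1) (σ 2) := by
      rw [tri, ← fin3_eta, single_eq_smul]
    simp only [LinearMap.comp_apply, hσ, map_smul, bnd1_tri, map_sub, map_add, bnd0_edge,
      LinearMap.zero_apply]
    rw [show (vtx (σ 2) - vtx (σ 1)) - (vtx (σ 2) - vtx (σ 0)) + (vtx (σ 1) - vtx (σ 0))
        = (0 : (Fin 1 → G) →₀ ℤ) by abel, smul_zero]
  exact DFunLike.congr_fun key c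

noncomputable def pathChain : G → List G → ((Fin 2 → G) →₀ ℤ)
  | _, [] => 0
  | a, x :: w => edge a (a * x) + pathChain (a * x) w

lemma bnd0_pathChain (a : G) (w : List G) :
    bnd 0 (pathChain a w) = vtx (a * w.prod) - vtx a := by
  induction w generalizing a with
  | nil => simp [pathChain]
  | cons x w ih =>
    simp only [pathChain, map_add, bnd0_edge, ih, List.prod_cons, ← mul_assoc]
    abel

noncomputable def fillAux : G → G → List G → ((Fin 3 → G) →₀ ℤ)
  | _, _, [] => 0
  | a, b, x :: w => tri a b (b * x) + fillAux a (b * x) w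

lemma bnd1_fillAux (a b : G) (w : List G) :
    bnd 1 (fillAux a b w) = pathChain b w + edge a b - edge a (b * w.prod) := by
  induction w generalizing b with
  | nil => simp [fillAux, pathChain]
  | cons x w ih =>
    simp only [fillAux, map_add, bnd1_tri, ih, pathChain, List.prod_cons, ← mul_assoc]
    abel

noncomputable def fillEdge (a : G) (w : List G) : (Fin 3 → G) →₀ ℤ :=
  tri a a a - fillAux a a w

lemma bnd1_fillEdge (a : G) (w : List G) :
    bnd 1 (fillEdge a w) = edge a (a * w.prod) - pathChain a w := by
  rw [fillEdge, map_sub, bnd1_fillAux, bnd1_tri]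
  abel

end Aux2


section Aux3
set_option linter.unusedSectionVars false
variable {G : Type*} [Group G]

lemma VRChain_zero (X : Finset G) (q k : ℕ) : VRChain X Set.univ q k (0 : (Fin (q+1) → G) →₀ ℤ) := by
  intro σ hσ; simp at hσ

lemma VRChain_add {X : Finset G} {q k : ℕ} {c d : (Fin (q+1) → G) →₀ ℤ}
    (hc : VRChain X Set.univ q k c) (hd : VRChain X Set.univ q k d) :
    VRChain X Set.univ q k (c + d) := by
  classical
  intro σ hσ
  rcases Finset.mem_union.1 (Finsupp.support_add hσ) with hm | hm
  · exact hc σ hm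
  · exact hd σ hm

lemma VRChain_neg {X : Finset G} {q k : ℕ} {c : (Fin (q+1) → G) →₀ ℤ}
    (hc : VRChain X Set.univ q k c) : VRChain X Set.univ q k (-c) := by
  intro σ hσ; rw [Finsupp.support_neg] at hσ; exact hc σ hσ

lemma VRChain_sub {X : Finset G} {q k : ℕ} {c d : (Fin (q+1) → G) →₀ ℤ}
    (hc : VRChain X Set.univ q k c) (hd : VRChain X Set.univ q k d) :
    VRChain X Set.univ q k (c - d) := by
  rw [sub_eq_add_neg]; exact VRChain_add hc (VRChain_neg hd)

lemma VRChain_smul {X : Finset G} {q k : ℕ} {c : (Fin (q+1) → G) →₀ ℤ} (n : ℤ)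
    (hc : VRChain X Set.univ q k c) : VRChain X Set.univ q k (n • c) := by
  intro σ hσ
  exact hc σ (Finsupp.support_smul hσ)

lemma VRChain_mono {X : Finset G} {q k k' : ℕ} {c : (Fin (q+1) → G) →₀ ℤ}
    (hk : k ≤ k') (hc : VRChain X Set.univ q k c) : VRChain X Set.univ q k' c := by
  intro σ hσ
  exact ⟨(hc σ hσ).1, fun i j => le_trans ((hc σ hσ).2 i j) hk⟩

lemma VRChain_sum {X : Finset G} {q k : ℕ} {ι : Type*} (s : Finset ι)
    (f : ι → ((Fin (q+1) → G) →₀ ℤ))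
    (hf : ∀ i ∈ s, VRChain X Set.univ q k (f i)) :
    VRChain X Set.univ q k (∑ i ∈ s, f i) :=
  Finset.sum_induction f _ (fun _ _ => VRChain_add) (VRChain_zero X q k) hf

lemma VRChain_single2 {X : Finset G} {k : ℕ} {a b : G} (n : ℤ)
    (hab : wordDist X a b ≤ k) (hba : wordDist X b a ≤ k) :
    VRChain X Set.univ 1 k (Finsupp.single ![a, b] n) := by
  intro σ hσ
  have hσ' : σ = ![a, b] :=
    Finset.mem_singleton.1 (Finsupp.support_single_subset hσ)
  subst hσ'
  refine ⟨fun i => Set.mem_univ _, fun i j => ?_⟩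
  fin_cases i <;> fin_cases j <;> simp [wordDist_self] <;> assumption

lemma VRChain_single3 {X : Finset G} {k : ℕ} {a b c : G} (n : ℤ)
    (hab : wordDist X a b ≤ k) (hba : wordDist X b a ≤ k)
    (hac : wordDist X a c ≤ k) (hca : wordDist X c a ≤ k)
    (hbc : wordDist X b c ≤ k) (hcb : wordDist X c b ≤ k) :
    VRChain X Set.univ 2 k (Finsupp.single ![a, b, c] n) := by
  intro σ hσ
  have hσ' : σ = ![a, b, c] :=
    Finset.mem_singleton.1 (Finsupp.support_single_subset hσ)
  subst hσ'
  refine ⟨fun i => Set.mem_univ _, fun i j => ?_⟩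
  fin_cases i <;> fin_cases j <;> simp [wordDist_self] <;> assumption

lemma VRChain_pathChain (X : Finset G) (hX : Subgroup.closure (X : Set G) = ⊤)
    {w : List G} (hw : ∀ x ∈ w, x ∈ X ∨ x⁻¹ ∈ X) (a : G) :
    VRChain X Set.univ 1 1 (pathChain a w) := by
  induction w generalizing a with
  | nil => exact VRChain_zero X 1 1
  | cons x w ih =>
    refine VRChain_add (VRChain_single2 1 ?_ ?_) (ih (fun y hy => hw y (List.mem_cons_of_mem _ hy)) _)
    · exact wordDist_gen X (hw x (List.mem_cons_self)) a
    · exact wordDist_gen' X hX (hw x (List.mem_cons_self)) a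

lemma VRChain_fillAux (X : Finset G) (hX : Subgroup.closure (X : Set G) = ⊤)
    {m : ℕ} (hm : 1 ≤ m) {w : List G} (hw : ∀ x ∈ w, x ∈ X ∨ x⁻¹ ∈ X)
    (a : G) : ∀ b : G, wordDist X a b + w.length ≤ m →
    VRChain X Set.univ 2 m (fillAux a b w) := by
  induction w with
  | nil => exact fun b _ => VRChain_zero X 2 m
  | cons x w ih =>
    intro b hb
    simp only [List.length_cons] at hb
    have hx := hw x (List.mem_cons_self)
    have hab : wordDist X a b ≤ m := by omega
    have hbbx : wordDist X b (b * x) ≤ 1 := wordDist_gen X hx b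
    have habx : wordDist X a (b * x) ≤ wordDist X a b + 1 :=
      le_trans (wordDist_triangle X hX a b (b * x)) (by omega)
    refine VRChain_add (VRChain_single3 1 hab (by rw [wordDist_comm X hX]; exact hab)
      (by omega) (by rw [wordDist_comm X hX]; omega)
      (le_trans hbbx hm) (by rw [wordDist_comm X hX]; exact le_trans hbbx hm)) ?_
    exact ih (fun y hy => hw y (List.mem_cons_of_mem _ hy)) (b * x) (by omega)

lemma VRChain_fillEdge (X : Finset G) (hX : Subgroup.closure (X : Set G) = ⊤)
    {m : ℕ} (hm : 1 ≤ m) {w : List G} (hw : ∀ x ∈ w, x ∈ X ∨ x⁻¹ ∈ X)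
    (hlen : w.length ≤ m) (a : G) :
    VRChain X Set.univ 2 m (fillEdge a w) := by
  refine VRChain_sub (VRChain_single3 1 ?_ ?_ ?_ ?_ ?_ ?_) ?_ <;>
    first
    | simp [wordDist_self]
    | exact VRChain_fillAux X hX hm hw a a (by simpa [wordDist_self] using hlen)

/-! ### Choice of geodesic words and the filling maps -/

noncomputable def chooseWord (X : Finset G) (hX : Subgroup.closure (X : Set G) = ⊤) (g : G) :
    List G := (wordLength_exists X hX g).choose

lemma chooseWord_length (X : Finset G) (hX : Subgroup.closure (X : Set G) = ⊤) (g : G) :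
    (chooseWord X hX g).length = wordLength X g := (wordLength_exists X hX g).choose_spec.1

lemma chooseWord_mem (X : Finset G) (hX : Subgroup.closure (X : Set G) = ⊤) (g : G) :
    ∀ x ∈ chooseWord X hX g, x ∈ X ∨ x⁻¹ ∈ X := (wordLength_exists X hX g).choose_spec.2.1

lemma chooseWord_prod (X : Finset G) (hX : Subgroup.closure (X : Set G) = ⊤) (g : G) :
    (chooseWord X hX g).prod = g := (wordLength_exists X hX g).choose_spec.2.2

noncomputable def F0map (X : Finset G) (hX : Subgroup.closure (X : Set G) = ⊤) :
    ((Fin 1 → G) →₀ ℤ) →ₗ[ℤ] ((Fin 2 → G) →₀ ℤ) :=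
  Finsupp.lift _ ℤ _ (fun σ : Fin 1 → G => pathChain 1 (chooseWord X hX (σ 0)))

noncomputable def Pmap (X : Finset G) (hX : Subgroup.closure (X : Set G) = ⊤) :
    ((Fin 2 → G) →₀ ℤ) →ₗ[ℤ] ((Fin 2 → G) →₀ ℤ) :=
  Finsupp.lift _ ℤ _ (fun σ : Fin 2 → G => pathChain (σ 0) (chooseWord X hX ((σ 0)⁻¹ * σ 1)))

noncomputable def Fmap (X : Finset G) (hX : Subgroup.closure (X : Set G) = ⊤) :
    ((Fin 2 → G) →₀ ℤ) →ₗ[ℤ] ((Fin 3 → G) →₀ ℤ) :=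
  Finsupp.lift _ ℤ _ (fun σ : Fin 2 → G => fillEdge (σ 0) (chooseWord X hX ((σ 0)⁻¹ * σ 1)))

lemma F0map_single (X : Finset G) (hX : Subgroup.closure (X : Set G) = ⊤)
    (σ : Fin 1 → G) (n : ℤ) :
    F0map X hX (Finsupp.single σ n) = n • pathChain 1 (chooseWord X hX (σ 0)) := by
  simp [F0map, Finsupp.lift_apply, Finsupp.sum_single_index]

lemma Pmap_single (X : Finset G) (hX : Subgroup.closure (X : Set G) = ⊤)
    (σ : Fin 2 → G) (n : ℤ) :
    Pmap X hX (Finsupp.single σ n)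
      = n • pathChain (σ 0) (chooseWord X hX ((σ 0)⁻¹ * σ 1)) := by
  simp [Pmap, Finsupp.lift_apply, Finsupp.sum_single_index]

lemma Fmap_single (X : Finset G) (hX : Subgroup.closure (X : Set G) = ⊤)
    (σ : Fin 2 → G) (n : ℤ) :
    Fmap X hX (Finsupp.single σ n)
      = n • fillEdge (σ 0) (chooseWord X hX ((σ 0)⁻¹ * σ 1)) := by
  simp [Fmap, Finsupp.lift_apply, Finsupp.sum_single_index]

lemma F0map_key (X : Finset G) (hX : Subgroup.closure (X : Set G) = ⊤)
    (z : (Fin 1 → G) →₀ ℤ) :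
    bnd 0 (F0map X hX z) = z - aug z • vtx 1 := by
  have key : (bnd 0).comp (F0map X hX)
      = LinearMap.id - (LinearMap.toSpanSingleton ℤ _ (vtx (1 : G))).comp aug := by
    apply Finsupp.lhom_ext
    intro σ n
    have haug : aug (Finsupp.single σ n) = n := by
      simp [aug, Finsupp.lift_apply, Finsupp.sum_single_index]
    have hz : (Finsupp.single σ n : (Fin 1 → G) →₀ ℤ) = n • vtx (σ 0) := by
      rw [vtx, ← fin1_eta, single_eq_smul]
    rw [LinearMap.comp_apply, F0map_single, map_smul, bnd0_pathChain, chooseWord_prod,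
      one_mul, LinearMap.sub_apply, LinearMap.id_apply, LinearMap.comp_apply,
      LinearMap.toSpanSingleton_apply, haug, hz, ← smul_sub]
  have := DFunLike.congr_fun key z
  simpa using this

lemma PF_key (X : Finset G) (hX : Subgroup.closure (X : Set G) = ⊤)
    (z : (Fin 2 → G) →₀ ℤ) :
    z = Pmap X hX z + bnd 1 (Fmap X hX z) := by
  have key : (LinearMap.id : ((Fin 2 → G) →₀ ℤ) →ₗ[ℤ] _)
      = Pmap X hX + (bnd 1).comp (Fmap X hX) := by
    apply Finsupp.lhom_ext
    intro σ n
    have hprod : σ 0 * (chooseWord X hX ((σ 0)⁻¹ * σ 1)).prod = σ 1 := by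
      rw [chooseWord_prod]; group
    rw [LinearMap.id_apply, LinearMap.add_apply, LinearMap.comp_apply, Pmap_single,
      Fmap_single, map_smul, bnd1_fillEdge, hprod, smul_sub, add_sub_cancel,
      show edge (σ 0) (σ 1) = Finsupp.single σ 1 by rw [edge, ← fin2_eta],
      ← single_eq_smul]
  exact DFunLike.congr_fun key z

lemma VRChain_F0map (X : Finset G) (hX : Subgroup.closure (X : Set G) = ⊤)
    (z : (Fin 1 → G) →₀ ℤ) :
    VRChain X Set.univ 1 1 (F0map X hX z) := by
  rw [show F0map X hX z = z.sum fun σ n => n • pathChain 1 (chooseWord X hX (σ 0)) from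
    Finsupp.lift_apply ..]
  exact VRChain_sum _ _ fun σ _ =>
    VRChain_smul _ (VRChain_pathChain X hX (chooseWord_mem X hX _) _)

lemma VRChain_Pmap (X : Finset G) (hX : Subgroup.closure (X : Set G) = ⊤)
    (z : (Fin 2 → G) →₀ ℤ) :
    VRChain X Set.univ 1 1 (Pmap X hX z) := by
  rw [show Pmap X hX z
      = z.sum fun σ n => n • pathChain (σ 0) (chooseWord X hX ((σ 0)⁻¹ * σ 1)) from
    Finsupp.lift_apply ..]
  exact VRChain_sum _ _ fun σ _ =>
    VRChain_smul _ (VRChain_pathChain X hX (chooseWord_mem X hX _) _)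

lemma VRChain_Fmap (X : Finset G) (hX : Subgroup.closure (X : Set G) = ⊤)
    {k m : ℕ} (hm1 : 1 ≤ m) (hkm : k ≤ m) (z : (Fin 2 → G) →₀ ℤ)
    (hz : VRChain X Set.univ 1 k z) :
    VRChain X Set.univ 2 m (Fmap X hX z) := by
  rw [show Fmap X hX z
      = z.sum fun σ n => n • fillEdge (σ 0) (chooseWord X hX ((σ 0)⁻¹ * σ 1)) from
    Finsupp.lift_apply ..]
  refine VRChain_sum _ _ fun σ hσ => VRChain_smul _ ?_
  refine VRChain_fillEdge X hX hm1 (chooseWord_mem X hX _) ?_ _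
  rw [chooseWord_length]
  exact le_trans ((hz σ hσ).2 0 1) hkm

end Aux3


/-- If there is `l ≥ 1` such that reduced `1`-cycles at scale `1` bound at scale `l`,
then `G` is of type `FP₂`. -/
theorem stmt4 {G : Type*} [Group G] (X : Finset G)
    (hX : Subgroup.closure (X : Set G) = ⊤)
    (h : ∃ l ≥ 1, BoundsAt X Set.univ 1 1 l) :
    TypeFP X Set.univ 2 := by
  intro q hq k
  interval_cases q
  · -- reduced 0-cycles bound at scale 1
    refine ⟨k + 1, by omega, ?_⟩
    intro z _hz hz0
    refine ⟨F0map X hX z, ?_, ?_⟩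
    · exact VRChain_mono (by omega) (VRChain_F0map X hX z)
    · rw [F0map_key, hz0]; simp
  · -- reduced 1-cycles at scale k bound at scale l + max k 1
    obtain ⟨l, hl1, hB⟩ := h
    refine ⟨l + max k 1, by omega, ?_⟩
    intro z hz hz0
    have hP1 : VRChain X Set.univ 1 1 (Pmap X hX z) := VRChain_Pmap X hX z
    have hPcyc : bnd 0 (Pmap X hX z) = 0 := by
      have hsum : bnd 0 z = bnd 0 (Pmap X hX z) + bnd 0 (bnd 1 (Fmap X hX z)) := by
        conv_lhs => rw [PF_key X hX z]
        rw [map_add]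
      rw [hz0, bnd0_bnd1, add_zero] at hsum
      exact hsum.symm
    obtain ⟨c', hc', hbc'⟩ := hB (Pmap X hX z) hP1 hPcyc
    refine ⟨c' + Fmap X hX z, ?_, ?_⟩
    · exact VRChain_add (VRChain_mono (by omega) hc')
        (VRChain_mono (by omega)
          (VRChain_Fmap X hX (by omega) (le_max_left k 1) z hz))
    · rw [map_add, hbc', ← PF_key]
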